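/- A submonoid C of ℤⁿ is finitely generated if and only if pure(C) = {α ∈ ℤⁿ : ∃ k ≥ 1, kα ∈ C} is finitely generated. -/

import Mathlib

/-- Canonical embedding of `ℤⁿ` into `ℝⁿ`. -/
def coeR {n : ℕ} (α : Fin n → ℤ) : Fin n → ℝ := fun i => (α i : ℝ)

/-- Convex hull in `ℝⁿ` of a subset of `ℤⁿ`. -/
def convC {n : ℕ} (C : Set (Fin n → ℤ)) : Set (Fin n → ℝ) :=
  convexHull ℝ (coeR '' C)

/-- The closure `cl(C) = ℤⁿ ∩ topological-closure(conv C)` of a subset of `ℤⁿ`. -/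
def intCl {n : ℕ} (C : Set (Fin n → ℤ)) : Set (Fin n → ℤ) :=
  {α | coeR α ∈ closure (convC C)}

/-- `C` is pure: `kα ∈ C` with `k ≥ 1` implies `α ∈ C`. -/
def IsPure {n : ℕ} (C : Set (Fin n → ℤ)) : Prop :=
  ∀ (k : ℕ) (α : Fin n → ℤ), 1 ≤ k → k • α ∈ C → α ∈ C

/-- `C` is a submonoid of `(ℤⁿ, +)` (as a set). -/
def IsSubmonoidSet {n : ℕ} (C : Set (Fin n → ℤ)) : Prop :=
  (0 : Fin n → ℤ) ∈ C ∧ ∀ a ∈ C, ∀ b ∈ C, a + b ∈ C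

/-- `M` is a finitely generated monoid (as a subset of `ℤⁿ`). -/
def IsFGSet {n : ℕ} (M : Set (Fin n → ℤ)) : Prop :=
  ∃ F : Finset (Fin n → ℤ),
    (AddSubmonoid.closure (F : Set (Fin n → ℤ)) : Set (Fin n → ℤ)) = M

/-- `C` is almost prismal: for every real subspace `V ⊆ ℝⁿ`, `cl(C ∩ V)` is finitely generated. -/
def AlmostPrismal {n : ℕ} (C : Set (Fin n → ℤ)) : Prop :=
  ∀ V : Submodule ℝ (Fin n → ℝ), IsFGSet (intCl {α ∈ C | coeR α ∈ V})

/-- `C` is prismal: pure and almost prismal. -/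
def Prismal {n : ℕ} (C : Set (Fin n → ℤ)) : Prop := IsPure C ∧ AlmostPrismal C


lemma mem_closure_finset' {M : Type*} [AddCommMonoid M] {F : Finset M} {x : M} :
    x ∈ AddSubmonoid.closure (F : Set M) ↔ ∃ f : M → ℕ, ∑ i ∈ F, f i • i = x := by
  rw [← Submodule.span_nat_eq_addSubmonoidClosure, Submodule.mem_toAddSubmonoid]
  rw [Submodule.mem_span_finset]
  classical
  exact ⟨fun ⟨f, _, hf⟩ => ⟨f, hf⟩, fun ⟨f, hf⟩ => ⟨fun a => if a ∈ F then f a else 0,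
    fun a ha => by by_contra h; exact ha (if_neg h), by rw [← hf]; exact Finset.sum_congr rfl fun a ha => by simp only [if_pos ha]⟩⟩

lemma exists_minimal_le' {ι : Type*} [Fintype ι] (T : Set (ι → ℕ)) :
    ∀ t ∈ T, ∃ m ∈ T, m ≤ t ∧ ∀ x ∈ T, x ≤ m → x = m := by
  suffices h : ∀ N : ℕ, ∀ t ∈ T, ∑ i, t i = N → ∃ m ∈ T, m ≤ t ∧ ∀ x ∈ T, x ≤ m → x = m by
    exact fun t ht => h (∑ i, t i) t ht rfl
  intro N
  induction N using Nat.strong_induction_on with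
  | _ N ih =>
    intro t ht hsum
    by_cases hmin : ∀ x ∈ T, x ≤ t → x = t
    · exact ⟨t, ht, le_refl t, hmin⟩
    · push_neg at hmin
      obtain ⟨x, hx, hxt, hne⟩ := hmin
      have hlt : ∑ i, x i < N := by
        rw [← hsum]
        refine Finset.sum_lt_sum (fun i _ => hxt i) ?_
        obtain ⟨i, hi⟩ := Function.ne_iff.mp hne
        exact ⟨i, Finset.mem_univ i, lt_of_le_of_ne (hxt i) hi⟩
      obtain ⟨m, hm, hmx, hmmin⟩ := ih _ hlt x hx rfl
      exact ⟨m, hm, hmx.trans hxt, hmmin⟩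

lemma dickson_basis {ι : Type*} [Fintype ι] (T : Set (ι → ℕ)) :
    ∃ B : Finset (ι → ℕ), ↑B ⊆ T ∧ ∀ t ∈ T, ∃ u ∈ B, u ≤ t := by
  classical
  set M : Set (ι → ℕ) := {m ∈ T | ∀ x ∈ T, x ≤ m → x = m} with hM
  have hanti : IsAntichain (· ≤ ·) M := fun a ha b hb hne hab => hne (hb.2 a ha.1 hab)
  have hfin : M.Finite :=
    hanti.finite_of_partiallyWellOrderedOn
      ((Set.isPWO_of_wellQuasiOrderedLE T).mono (fun x hx => hx.1))
  refine ⟨hfin.toFinset, fun x hx => ((Set.Finite.mem_toFinset hfin).mp hx).1, fun t ht => ?_⟩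
  obtain ⟨m, hm, hmt, hmin⟩ := exists_minimal_le' T t ht
  exact ⟨m, (Set.Finite.mem_toFinset hfin).mpr ⟨hm, hmin⟩, hmt⟩

theorem fg_of_pure_fg' {n : ℕ} (C : Set (Fin n → ℤ)) (hC : IsSubmonoidSet C)
    (h : IsFGSet {α : Fin n → ℤ | ∃ k : ℕ, 1 ≤ k ∧ k • α ∈ C}) : IsFGSet C := by
  classical
  obtain ⟨G, hG⟩ := h
  set S : Set (Fin n → ℤ) := {α | ∃ k : ℕ, 1 ≤ k ∧ k • α ∈ C} with hSdef
  have hCnsmul : ∀ m : ℕ, ∀ c ∈ C, m • c ∈ C := by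
    intro m
    induction m with
    | zero => intro c _; simpa using hC.1
    | succ m ih => intro c hc; rw [succ_nsmul]; exact hC.2 _ (ih c hc) _ hc
  have hCS : C ⊆ S := fun c hc => ⟨1, le_refl 1, by simpa using hc⟩
  set CM : AddSubmonoid (Fin n → ℤ) :=
    { carrier := C
      zero_mem' := hC.1
      add_mem' := fun ha hb => hC.2 _ ha _ hb } with hCM
  have hGS : ∀ g ∈ G, g ∈ S := fun g hg => hG ▸ AddSubmonoid.subset_closure hg
  have hex : ∀ g : Fin n → ℤ, ∃ m : ℕ, 1 ≤ m ∧ (g ∈ G → m • g ∈ C) := by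
    intro g; by_cases hg : g ∈ G
    · obtain ⟨m, hm, hmc⟩ := hGS g hg; exact ⟨m, hm, fun _ => hmc⟩
    · exact ⟨1, le_refl 1, fun hgg => absurd hgg hg⟩
  choose k hk1 hkC using hex
  set K : ℕ := ∏ g ∈ G, k g with hK
  have hK1 : 0 < K := Finset.prod_pos fun i _ => hk1 i
  have hKg : ∀ g ∈ G, K • g ∈ C := by
    intro g hg
    obtain ⟨m, hm⟩ := Finset.dvd_prod_of_mem k hg
    rw [show K • g = m • (k g • g) by rw [smul_smul, mul_comm, ← hm]]
    exact hCnsmul m _ (hkC g hg)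
  have hKS : ∀ s ∈ S, K • s ∈ C := by
    intro s hs
    rw [← hG] at hs
    obtain ⟨f, hf⟩ := mem_closure_finset'.mp hs
    rw [← hf, Finset.smul_sum]
    have : ∀ i ∈ G, K • (f i • i) ∈ CM := by
      intro i hi
      rw [smul_smul, mul_comm, mul_smul]
      exact hCnsmul (f i) _ (hKg i hi)
    exact sum_mem this
  -- index type
  set φ : ({x : Fin n → ℤ // x ∈ G} → ℕ) → (Fin n → ℤ) :=
    fun a => ∑ g : {x : Fin n → ℤ // x ∈ G}, a g • (g : Fin n → ℤ) with hφ
  have hφS : ∀ a, φ a ∈ S := by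
    intro a; rw [← hG]
    exact sum_mem fun g _ => AddSubmonoid.nsmul_mem _ (AddSubmonoid.subset_closure g.2) _
  have hφsub : ∀ a b, a ≤ b → φ a + φ (b - a) = φ b := by
    intro a b hab
    rw [hφ, ← Finset.sum_add_distrib]
    refine Finset.sum_congr rfl fun g _ => ?_
    rw [← add_smul, Pi.sub_apply, Nat.add_sub_cancel' (hab g)]
  set R : Set ({x : Fin n → ℤ // x ∈ G} → ℕ) := {r | ∀ g, r g < K} with hR
  have hRfin : R.Finite := by
    refine Set.Finite.subset (Set.Finite.pi (fun g => Set.finite_Iio K)) ?_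
    intro r hr g _
    exact hr g
  set T : ({x : Fin n → ℤ // x ∈ G} → ℕ) → Set ({x : Fin n → ℤ // x ∈ G} → ℕ) :=
    fun r => {q | φ r + K • φ q ∈ C} with hT
  choose B hBsub hBle using fun r => dickson_basis (T r)
  set H : Set (Fin n → ℤ) :=
    (⋃ r ∈ R, (fun u => φ r + K • φ u) '' (B r : Set _)) ∪ ((fun g => K • g) '' (G : Set _))
    with hH
  have hHfin : H.Finite :=
    (Set.Finite.biUnion hRfin fun r _ => ((B r).finite_toSet.image _)).union
      ((G.finite_toSet).image _)
  have hHC : H ⊆ C := by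
    rintro x (hx | hx)
    · rw [Set.mem_iUnion₂] at hx
      obtain ⟨r, hr, u, hu, rfl⟩ := hx
      exact hBsub r hu
    · obtain ⟨g, hg, rfl⟩ := hx
      exact hKg g hg
  refine ⟨hHfin.toFinset, ?_⟩
  rw [Set.Finite.coe_toFinset]
  apply Set.Subset.antisymm
  · exact (AddSubmonoid.closure_le (S := CM)).mpr hHC
  · intro c hc
    have hcS : c ∈ S := hCS hc
    rw [← hG] at hcS
    obtain ⟨f, hf⟩ := mem_closure_finset'.mp hcS
    set a : {x : Fin n → ℤ // x ∈ G} → ℕ := fun g => f (g : Fin n → ℤ) with ha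
    have hfa : φ a = c := by
      rw [← hf, hφ]
      exact Finset.sum_coe_sort G (fun i => f i • i)
    set q : {x : Fin n → ℤ // x ∈ G} → ℕ := fun g => a g / K with hq
    set r : {x : Fin n → ℤ // x ∈ G} → ℕ := fun g => a g % K with hr2
    have hrR : r ∈ R := fun g => Nat.mod_lt _ hK1
    have hdec : c = φ r + K • φ q := by
      rw [← hfa, hφ, Finset.smul_sum, ← Finset.sum_add_distrib]
      refine Finset.sum_congr rfl fun g _ => ?_
      rw [smul_smul, ← add_smul, hr2, hq, ha, Nat.mod_add_div]
    have hqT : q ∈ T r := by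
      show φ r + K • φ q ∈ C
      rw [← hdec]; exact hc
    obtain ⟨u, hu, hle⟩ := hBle r q hqT
    have hsplit : c = (φ r + K • φ u) + K • φ (q - u) := by
      rw [hdec, ← hφsub u q hle, smul_add]
      abel
    rw [hsplit]
    refine add_mem (AddSubmonoid.subset_closure ?_) ?_
    · exact Or.inl (Set.mem_iUnion₂.mpr ⟨r, hrR, u, hu, rfl⟩)
    · have e : K • φ (q - u) = ∑ g : {x : Fin n → ℤ // x ∈ G}, (q - u) g • (K • (g : Fin n → ℤ)) := by
        rw [hφ, Finset.smul_sum]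
        exact Finset.sum_congr rfl fun g _ => by rw [smul_smul, mul_comm, mul_smul]
      rw [e]
      refine sum_mem fun g _ => AddSubmonoid.nsmul_mem _ (AddSubmonoid.subset_closure ?_) _
      exact Or.inr ⟨g, g.2, rfl⟩


theorem pure_fg_of_fg (C : Set (Fin n → ℤ)) (hC : IsSubmonoidSet C) (h : IsFGSet C) :
    IsFGSet {α : Fin n → ℤ | ∃ k : ℕ, 1 ≤ k ∧ k • α ∈ C} := by
  classical
  obtain ⟨F, hF⟩ := h
  set S : Set (Fin n → ℤ) := {α | ∃ k : ℕ, 1 ≤ k ∧ k • α ∈ C} with hSdef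
  have hCnsmul : ∀ m : ℕ, ∀ c ∈ C, m • c ∈ C := by
    intro m
    induction m with
    | zero => intro c _; simpa using hC.1
    | succ m ih => intro c hc; rw [succ_nsmul]; exact hC.2 _ (ih c hc) _ hc
  have hCS : C ⊆ S := fun c hc => ⟨1, le_refl 1, by simpa using hc⟩
  have hS0 : (0 : Fin n → ℤ) ∈ S := hCS hC.1
  have hSadd : ∀ a ∈ S, ∀ b ∈ S, a + b ∈ S := by
    rintro a ⟨k, hk, hka⟩ b ⟨l, hl, hlb⟩
    refine ⟨k * l, by nlinarith, ?_⟩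
    have e : (k * l) • (a + b) = l • (k • a) + k • (l • b) := by
      rw [smul_add]; congr 1
      · rw [mul_comm, mul_smul]
      · rw [mul_smul]
    rw [e]
    exact hC.2 _ (hCnsmul l _ hka) _ (hCnsmul k _ hlb)
  set SM : AddSubmonoid (Fin n → ℤ) :=
    { carrier := S
      zero_mem' := hS0
      add_mem' := fun ha hb => hSadd _ ha _ hb } with hSM
  set B : Fin n → ℤ := fun j => ∑ i ∈ F, |i j| with hB
  set G : Set (Fin n → ℤ) := {α | α ∈ S ∧ ∀ j, |α j| ≤ B j} with hGdef
  have hGfin : G.Finite := by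
    refine Set.Finite.subset (Set.Finite.pi (fun j => Set.finite_Icc (-(B j)) (B j))) ?_
    intro α hα
    intro j _
    exact Set.mem_Icc.mpr (abs_le.mp (hα.2 j))
  refine ⟨hGfin.toFinset, ?_⟩
  rw [Set.Finite.coe_toFinset]
  apply Set.Subset.antisymm
  · have : AddSubmonoid.closure G ≤ SM :=
      AddSubmonoid.closure_le.mpr (fun x hx => hx.1)
    exact this
  · intro α hα
    obtain ⟨k, hk, hkα⟩ := hα
    have hk0 : 0 < k := hk
    rw [← hF] at hkα
    obtain ⟨f, hf⟩ := mem_closure_finset'.mp hkα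
    set β : Fin n → ℤ := α - ∑ i ∈ F, (f i / k) • i with hβ
    have hsplit : ∀ i : Fin n → ℤ, f i • i = (k * (f i / k)) • i + (f i % k) • i := by
      intro i; rw [← add_smul, Nat.div_add_mod]
    have h1 : k • α = ∑ i ∈ F, (k * (f i / k)) • i + ∑ i ∈ F, (f i % k) • i := by
      rw [← hf, ← Finset.sum_add_distrib]
      exact Finset.sum_congr rfl fun i _ => hsplit i
    have key : k • β = ∑ i ∈ F, (f i % k) • i := by
      rw [hβ, smul_sub, Finset.smul_sum, h1]
      simp_rw [smul_smul]
      exact add_sub_cancel_left _ _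
    have hβS : β ∈ S := by
      refine ⟨k, hk, ?_⟩
      rw [key, ← hF]
      exact sum_mem fun i hi => AddSubmonoid.nsmul_mem _ (AddSubmonoid.subset_closure hi) _
    have hFQ : ∀ i ∈ F, i ∈ G := by
      intro i hi
      refine ⟨hCS (hF ▸ AddSubmonoid.subset_closure hi), fun j => ?_⟩
      exact Finset.single_le_sum (f := fun x => |x j|) (fun x _ => abs_nonneg _) hi
    have hβG : β ∈ G := by
      refine ⟨hβS, fun j => ?_⟩
      have h3 : |(k • β) j| ≤ (k : ℤ) * B j := by
        have e1 : (k • β) j = ∑ i ∈ F, ((f i % k : ℕ) : ℤ) * i j := by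
          rw [key]
          simp [Finset.sum_apply]
        rw [e1]
        calc |∑ i ∈ F, ((f i % k : ℕ) : ℤ) * i j|
            ≤ ∑ i ∈ F, |((f i % k : ℕ) : ℤ) * i j| := Finset.abs_sum_le_sum_abs _ _
          _ ≤ ∑ i ∈ F, (k : ℤ) * |i j| := by
              refine Finset.sum_le_sum fun i _ => ?_
              rw [abs_mul, abs_of_nonneg (by positivity : (0:ℤ) ≤ ((f i % k : ℕ) : ℤ))]
              refine mul_le_mul_of_nonneg_right ?_ (abs_nonneg _)
              exact_mod_cast (Nat.mod_lt _ hk0).le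
          _ = (k : ℤ) * B j := by rw [hB, Finset.mul_sum]
      have e2 : |(k • β) j| = (k : ℤ) * |β j| := by
        have : (k • β) j = (k : ℤ) * β j := by
          simp [Pi.smul_apply, nsmul_eq_mul]
        rw [this, abs_mul, abs_of_nonneg (by positivity : (0:ℤ) ≤ (k:ℤ))]
      rw [e2] at h3
      exact le_of_mul_le_mul_left h3 (by exact_mod_cast hk0)
    have hdecomp : α = ∑ i ∈ F, (f i / k) • i + β := by
      rw [hβ]; abel
    rw [hdecomp]
    refine add_mem (sum_mem fun i hi => ?_) (AddSubmonoid.subset_closure hβG)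
    exact AddSubmonoid.nsmul_mem _ (AddSubmonoid.subset_closure (hFQ i hi)) _


/-- A submonoid `C` of `ℤⁿ` is finitely generated iff its saturation `pure(C)` is. -/
theorem fg_iff_pure_fg {n : ℕ} (C : Set (Fin n → ℤ)) (hC : IsSubmonoidSet C) :
    IsFGSet C ↔ IsFGSet {α : Fin n → ℤ | ∃ k : ℕ, 1 ≤ k ∧ k • α ∈ C} :=
  ⟨pure_fg_of_fg C hC, fg_of_pure_fg' C hC⟩
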